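/- arXiv:2211.11195 — 4 statements merged into one kernel-verified Lean document; each statement's English description precedes it below -/
import Mathlib

section
/- If C¹ functions x, p, p¹, p² : [0,T] → ℝⁿ and a continuous u : [0,T] → ℝᵐ solve the system det-(CC-MT), then p(t) = p¹(t) + p²(t) for all t ∈ [0,T], and the triple (x, u, p) solves the system det-(H-MC). (Deterministic, zero-noise version of one direction of Lemma 5.1: the consistency-condition system of the mean-field team problem implies the Hamiltonian system of the mean-field control problem.) -/
open Matrix Set

private lemma mulVec_norm_le {n : ℕ} (M : Matrix (Fin n) (Fin n) ℝ) (y : Fin n → ℝ) :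
    ‖M *ᵥ y‖ ≤ (∑ i, ∑ j, |M i j|) * ‖y‖ := by
  have hC : (0:ℝ) ≤ (∑ i, ∑ j, |M i j|) * ‖y‖ :=
    mul_nonneg (Finset.sum_nonneg fun i _ => Finset.sum_nonneg fun j _ => abs_nonneg _)
      (norm_nonneg _)
  rw [pi_norm_le_iff_of_nonneg hC]
  intro i
  calc ‖(M *ᵥ y) i‖ = |∑ j, M i j * y j| := by rfl
    _ ≤ ∑ j, |M i j * y j| := Finset.abs_sum_le_sum_abs _ _
    _ ≤ ∑ j, |M i j| * ‖y‖ := by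
        refine Finset.sum_le_sum fun j _ => ?_
        rw [abs_mul]
        exact mul_le_mul_of_nonneg_left (norm_le_pi_norm y j) (abs_nonneg _)
    _ = (∑ j, |M i j|) * ‖y‖ := by rw [Finset.sum_mul]
    _ ≤ (∑ i, ∑ j, |M i j|) * ‖y‖ := by
        refine mul_le_mul_of_nonneg_right ?_ (norm_nonneg _)
        exact Finset.single_le_sum (f := fun i => ∑ j, |M i j|)
          (fun i _ => Finset.sum_nonneg fun j _ => abs_nonneg _) (Finset.mem_univ i)

private lemma lipschitz_neg_mulVec {n : ℕ} (M : Matrix (Fin n) (Fin n) ℝ) {C : ℝ}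
    (hC : (∑ i, ∑ j, |M i j|) ≤ C) :
    LipschitzOnWith (Real.toNNReal C) (fun y : Fin n → ℝ => -(M *ᵥ y)) Set.univ := by
  refine LipschitzOnWith.of_dist_le_mul fun a _ b _ => ?_
  rw [dist_eq_norm, dist_eq_norm]
  have h1 : -(M *ᵥ a) - -(M *ᵥ b) = M *ᵥ (b - a) := by
    rw [Matrix.mulVec_sub]; abel
  rw [h1, norm_sub_rev a b]
  calc ‖M *ᵥ (b - a)‖ ≤ (∑ i, ∑ j, |M i j|) * ‖b - a‖ := mulVec_norm_le M (b - a)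
    _ ≤ (Real.toNNReal C) * ‖b - a‖ := by
        refine mul_le_mul_of_nonneg_right (le_trans hC ?_) (norm_nonneg _)
        exact Real.le_coe_toNNReal C

/-- Deterministic (zero-noise) version of one direction of Lemma 5.1: a solution of the
consistency-condition system det-(CC-MT) of the mean-field team problem satisfies
`p = p¹ + p²` and `(x, u, p)` solves the Hamiltonian system det-(H-MC) of the
mean-field control problem. -/
theorem stmt_1 {n m : ℕ} (T : ℝ) (hT : 0 < T) (x₀ : Fin n → ℝ)
    (A Abar Q Γ₁ : ℝ → Matrix (Fin n) (Fin n) ℝ)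
    (B Bbar : ℝ → Matrix (Fin n) (Fin m) ℝ)
    (R : ℝ → Matrix (Fin m) (Fin m) ℝ)
    (hA : ContinuousOn A (Icc 0 T)) (hAbar : ContinuousOn Abar (Icc 0 T))
    (hQ : ContinuousOn Q (Icc 0 T)) (hΓ₁ : ContinuousOn Γ₁ (Icc 0 T))
    (hB : ContinuousOn B (Icc 0 T)) (hBbar : ContinuousOn Bbar (Icc 0 T))
    (hR : ContinuousOn R (Icc 0 T))
    (hQsymm : ∀ t, (Q t)ᵀ = Q t) (hRsymm : ∀ t, (R t)ᵀ = R t)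
    (G Γ₂ : Matrix (Fin n) (Fin n) ℝ) (hGsymm : Gᵀ = G)
    (x p p1 p2 : ℝ → Fin n → ℝ) (u : ℝ → Fin m → ℝ)
    (hu : ContinuousOn u (Icc 0 T))
    -- state equation: x' = 𝒜 x + ℬ u, x(0) = x₀
    (hx0 : x 0 = x₀)
    (hx : ∀ t ∈ Icc (0 : ℝ) T,
      HasDerivWithinAt x ((A t + Abar t) *ᵥ x t + (B t + Bbar t) *ᵥ u t) (Icc 0 T) t)
    -- adjoint p¹: (p¹)' = −(Q x + Aᵀ p¹), p¹(T) = G x(T)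
    (hp1 : ∀ t ∈ Icc (0 : ℝ) T,
      HasDerivWithinAt p1 (-(Q t *ᵥ x t + (A t)ᵀ *ᵥ p1 t)) (Icc 0 T) t)
    (hp1T : p1 T = G *ᵥ x T)
    -- adjoint p²: (p²)' = −((Γ₁ᵀQΓ₁ − Γ₁ᵀQ − QΓ₁) x + Āᵀ p¹ + 𝒜ᵀ p²)
    (hp2 : ∀ t ∈ Icc (0 : ℝ) T,
      HasDerivWithinAt p2
        (-(((Γ₁ t)ᵀ * Q t * Γ₁ t - (Γ₁ t)ᵀ * Q t - Q t * Γ₁ t) *ᵥ x t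
          + (Abar t)ᵀ *ᵥ p1 t + (A t + Abar t)ᵀ *ᵥ p2 t)) (Icc 0 T) t)
    (hp2T : p2 T = (Γ₂ᵀ * G * Γ₂ - Γ₂ᵀ * G - G * Γ₂) *ᵥ x T)
    -- adjoint p: p' = −(Q̂ x + Aᵀ p + Āᵀ (p¹ + p²)), p(T) = Ĝ x(T)
    (hp : ∀ t ∈ Icc (0 : ℝ) T,
      HasDerivWithinAt p
        (-(((1 - Γ₁ t)ᵀ * Q t * (1 - Γ₁ t)) *ᵥ x t + (A t)ᵀ *ᵥ p t
          + (Abar t)ᵀ *ᵥ (p1 t + p2 t))) (Icc 0 T) t)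
    (hpT : p T = ((1 - Γ₂)ᵀ * G * (1 - Γ₂)) *ᵥ x T)
    -- stationarity: R u + Bᵀ p + B̄ᵀ (p¹ + p²) = 0
    (hstat : ∀ t ∈ Icc (0 : ℝ) T,
      R t *ᵥ u t + (B t)ᵀ *ᵥ p t + (Bbar t)ᵀ *ᵥ (p1 t + p2 t) = 0) :
    -- conclusion: p = p¹ + p² and (x, u, p) solves det-(H-MC)
    (∀ t ∈ Icc (0 : ℝ) T, p t = p1 t + p2 t) ∧
    x 0 = x₀ ∧
    (∀ t ∈ Icc (0 : ℝ) T,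
      HasDerivWithinAt x ((A t + Abar t) *ᵥ x t + (B t + Bbar t) *ᵥ u t) (Icc 0 T) t) ∧
    (∀ t ∈ Icc (0 : ℝ) T,
      HasDerivWithinAt p
        (-(((1 - Γ₁ t)ᵀ * Q t * (1 - Γ₁ t)) *ᵥ x t + (A t + Abar t)ᵀ *ᵥ p t)) (Icc 0 T) t) ∧
    p T = ((1 - Γ₂)ᵀ * G * (1 - Γ₂)) *ᵥ x T ∧
    (∀ t ∈ Icc (0 : ℝ) T, R t *ᵥ u t + (B t + Bbar t)ᵀ *ᵥ p t = 0) := by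
  set w : ℝ → Fin n → ℝ := fun t => p t - (p1 t + p2 t) with hw_def
  have hw : ∀ t ∈ Icc (0:ℝ) T,
      HasDerivWithinAt w (-((A t)ᵀ *ᵥ w t)) (Icc 0 T) t := by
    intro t ht
    have h : HasDerivWithinAt w _ (Icc 0 T) t := (hp t ht).sub ((hp1 t ht).add (hp2 t ht))
    convert h using 1
    simp only [hw_def, Matrix.mulVec_sub, Matrix.mulVec_add, Matrix.sub_mulVec,
      Matrix.add_mulVec, Matrix.transpose_add, Matrix.transpose_sub, Matrix.transpose_one,
      Matrix.sub_mul, Matrix.mul_sub, Matrix.one_mul, Matrix.mul_one]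
    abel
  have hwT : w T = 0 := by
    simp only [hw_def, hpT, hp1T, hp2T]
    simp only [Matrix.sub_mulVec, Matrix.add_mulVec, Matrix.transpose_sub, Matrix.transpose_one,
      Matrix.sub_mul, Matrix.mul_sub, Matrix.one_mul, Matrix.mul_one]
    abel
  obtain ⟨C, hC⟩ : ∃ C, ∀ t ∈ Icc (0:ℝ) T, ‖∑ i, ∑ j, |(A t)ᵀ i j|‖ ≤ C := by
    apply isCompact_Icc.exists_bound_of_continuousOn
    apply continuousOn_finset_sum
    intro i _
    apply continuousOn_finset_sum
    intro j _
    exact ((continuous_apply_apply j i).comp_continuousOn hA).abs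
  set cl : ℝ → ℝ := fun t => min (max t 0) T with hcl_def
  have hclmem : ∀ t, cl t ∈ Icc (0:ℝ) T := fun t =>
    ⟨le_min (le_max_right _ _) hT.le, min_le_right _ _⟩
  have hcleq : ∀ t ∈ Icc (0:ℝ) T, cl t = t := by
    intro t ht
    simp only [hcl_def]
    rw [max_eq_left ht.1, min_eq_left ht.2]
  set v : ℝ → (Fin n → ℝ) → (Fin n → ℝ) := fun t y => -((A (cl t))ᵀ *ᵥ y) with hv_def
  have hlip : ∀ t, LipschitzOnWith (Real.toNNReal C) (v t) Set.univ := by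
    intro t
    apply lipschitz_neg_mulVec
    calc (∑ i, ∑ j, |(A (cl t))ᵀ i j|) ≤ ‖∑ i, ∑ j, |(A (cl t))ᵀ i j|‖ := le_abs_self _
      _ ≤ C := hC (cl t) (hclmem t)
  have hwc : ContinuousOn w (Icc 0 T) := fun t ht => (hw t ht).continuousWithinAt
  have hmem : ∀ t ∈ Ioc (0:ℝ) T, Icc (0:ℝ) T ∈ nhdsWithin t (Iic t) := by
    intro t ht
    rw [mem_nhdsWithin]
    exact ⟨Ioi 0, isOpen_Ioi, ht.1, fun s hs => ⟨hs.1.le, le_trans hs.2 ht.2⟩⟩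
  have key : EqOn w (fun _ => (0 : Fin n → ℝ)) (Icc 0 T) := by
    apply ODE_solution_unique_of_mem_Icc_left (fun t _ => hlip t) hwc
    · intro t ht
      have h1 := (hw t ⟨ht.1.le, ht.2⟩).mono_of_mem_nhdsWithin (hmem t ht)
      simpa only [hv_def, hcleq t ⟨ht.1.le, ht.2⟩] using h1
    · intro t _; exact Set.mem_univ _
    · exact continuousOn_const
    · intro t ht
      have h0 : v t ((fun _ => (0 : Fin n → ℝ)) t) = 0 := by
        simp [hv_def]
      rw [h0]
      exact hasDerivWithinAt_const _ _ _
    · intro t _; exact Set.mem_univ _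
    · simpa using hwT
  have hpeq : ∀ t ∈ Icc (0:ℝ) T, p t = p1 t + p2 t := by
    intro t ht
    have h := key ht
    simp only [hw_def] at h
    have := sub_eq_zero.mp h
    exact this
  refine ⟨hpeq, hx0, hx, ?_, hpT, ?_⟩
  · intro t ht
    have h := hp t ht
    rw [← hpeq t ht] at h
    convert h using 1
    simp only [Matrix.transpose_add, Matrix.add_mulVec]
    abel
  · intro t ht
    have h := hstat t ht
    rw [← hpeq t ht] at h
    rw [← h]
    simp only [Matrix.transpose_add, Matrix.add_mulVec]
    abel
end

section
/- Suppose C¹ functions x, k : [0,T] → ℝⁿ and a continuous u : [0,T] → ℝᵐ solve the system det-(H-MC), and let p¹ : [0,T] → ℝⁿ be any C¹ solution of the linear backward equation (p¹)' = −(Q x + Aᵀ p¹) on [0,T] with p¹(T) = G x(T). Then, setting p := k and p² := k − p¹, the tuple (x, u, p, p¹, p²) solves the system det-(CC-MT). (Deterministic, zero-noise version of the converse direction of Lemma 5.1.) -/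
open Matrix Set

/-- Deterministic (zero-noise) version of the converse direction of Lemma 5.1: every
solution `(x, u, k)` of the Hamiltonian system det-(H-MC), together with any solution
`p¹` of the auxiliary linear backward equation, yields a solution
`(x, u, p := k, p¹, p² := k − p¹)` of the consistency system det-(CC-MT). -/
theorem stmt_2 {n m : ℕ} (T : ℝ) (hT : 0 < T) (x₀ : Fin n → ℝ)
    (A Abar Q Γ₁ : ℝ → Matrix (Fin n) (Fin n) ℝ)
    (B Bbar : ℝ → Matrix (Fin n) (Fin m) ℝ)
    (R : ℝ → Matrix (Fin m) (Fin m) ℝ)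
    (hA : ContinuousOn A (Icc 0 T)) (hAbar : ContinuousOn Abar (Icc 0 T))
    (hQ : ContinuousOn Q (Icc 0 T)) (hΓ₁ : ContinuousOn Γ₁ (Icc 0 T))
    (hB : ContinuousOn B (Icc 0 T)) (hBbar : ContinuousOn Bbar (Icc 0 T))
    (hR : ContinuousOn R (Icc 0 T))
    (hQsymm : ∀ t, (Q t)ᵀ = Q t) (hRsymm : ∀ t, (R t)ᵀ = R t)
    (G Γ₂ : Matrix (Fin n) (Fin n) ℝ) (hGsymm : Gᵀ = G)
    (x k p1 : ℝ → Fin n → ℝ) (u : ℝ → Fin m → ℝ)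
    (hu : ContinuousOn u (Icc 0 T))
    -- det-(H-MC): state equation x' = 𝒜 x + ℬ u, x(0) = x₀
    (hx0 : x 0 = x₀)
    (hx : ∀ t ∈ Icc (0 : ℝ) T,
      HasDerivWithinAt x ((A t + Abar t) *ᵥ x t + (B t + Bbar t) *ᵥ u t) (Icc 0 T) t)
    -- det-(H-MC): k' = −(Q̂ x + 𝒜ᵀ k), k(T) = Ĝ x(T)
    (hk : ∀ t ∈ Icc (0 : ℝ) T,
      HasDerivWithinAt k
        (-(((1 - Γ₁ t)ᵀ * Q t * (1 - Γ₁ t)) *ᵥ x t + (A t + Abar t)ᵀ *ᵥ k t)) (Icc 0 T) t)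
    (hkT : k T = ((1 - Γ₂)ᵀ * G * (1 - Γ₂)) *ᵥ x T)
    -- det-(H-MC): stationarity R u + ℬᵀ k = 0
    (hstat : ∀ t ∈ Icc (0 : ℝ) T, R t *ᵥ u t + (B t + Bbar t)ᵀ *ᵥ k t = 0)
    -- auxiliary backward equation for p¹: (p¹)' = −(Q x + Aᵀ p¹), p¹(T) = G x(T)
    (hp1 : ∀ t ∈ Icc (0 : ℝ) T,
      HasDerivWithinAt p1 (-(Q t *ᵥ x t + (A t)ᵀ *ᵥ p1 t)) (Icc 0 T) t)
    (hp1T : p1 T = G *ᵥ x T) :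
    -- conclusion: with p := k, p² := k − p¹, the tuple (x, u, p, p¹, p²) solves det-(CC-MT)
    (∀ t ∈ Icc (0 : ℝ) T,
      HasDerivWithinAt (fun s => k s - p1 s)
        (-(((Γ₁ t)ᵀ * Q t * Γ₁ t - (Γ₁ t)ᵀ * Q t - Q t * Γ₁ t) *ᵥ x t
          + (Abar t)ᵀ *ᵥ p1 t + (A t + Abar t)ᵀ *ᵥ (k t - p1 t))) (Icc 0 T) t) ∧
    k T - p1 T = (Γ₂ᵀ * G * Γ₂ - Γ₂ᵀ * G - G * Γ₂) *ᵥ x T ∧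
    (∀ t ∈ Icc (0 : ℝ) T,
      HasDerivWithinAt k
        (-(((1 - Γ₁ t)ᵀ * Q t * (1 - Γ₁ t)) *ᵥ x t + (A t)ᵀ *ᵥ k t
          + (Abar t)ᵀ *ᵥ (p1 t + (k t - p1 t)))) (Icc 0 T) t) ∧
    k T = ((1 - Γ₂)ᵀ * G * (1 - Γ₂)) *ᵥ x T ∧
    (∀ t ∈ Icc (0 : ℝ) T,
      R t *ᵥ u t + (B t)ᵀ *ᵥ k t + (Bbar t)ᵀ *ᵥ (p1 t + (k t - p1 t)) = 0) := by
  have key : ∀ (M N : Matrix (Fin n) (Fin n) ℝ),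
      (1 - M)ᵀ * N * (1 - M) = N - Mᵀ * N - N * M + Mᵀ * N * M := by
    intro M N
    simp [transpose_sub, Matrix.sub_mul, Matrix.mul_sub]
    noncomm_ring
  refine ⟨?_, ?_, ?_, hkT, ?_⟩
  · intro t ht
    have h := (hk t ht).sub (hp1 t ht)
    convert h using 1
    · rfl
    · rfl
    · rfl
    · rfl
    rw [key]
    simp only [Matrix.sub_mulVec, Matrix.add_mulVec, Matrix.transpose_add, Matrix.mulVec_sub]
    abel
  · rw [hkT, hp1T, key]
    simp only [Matrix.sub_mulVec, Matrix.add_mulVec]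
    abel
  · intro t ht
    have h := hk t ht
    convert h using 2
    simp only [Matrix.add_mulVec, Matrix.transpose_add, Matrix.mulVec_sub, Matrix.mulVec_add]
    abel
  · intro t ht
    have h := hstat t ht
    rw [show p1 t + (k t - p1 t) = k t by abel]
    rw [← h]
    simp only [Matrix.add_mulVec, Matrix.transpose_add]
    abel
end

section
/- Assume Ā(t) = 0 and B̄(t) = 0 for all t, that Γ₁(t)ᵀQ(t) = Γ₁(t)ᵀQ(t)Γ₁(t) for all t ∈ [0,T], and that Γ₂ᵀG = Γ₂ᵀGΓ₂ (these hold, e.g., when Γ₁ = Γ₂ = I or Γ₁ = Γ₂ = 0). Then a triple (x, u, l), with x, l ∈ C¹([0,T]; ℝⁿ) and u : [0,T] → ℝᵐ continuous, solves the system det-(CC-MG) if and only if it solves the system det-(H-MC). (Deterministic, zero-noise version of Lemma 4.1: under these conditions the consistency-condition system of the mean-field game and the Hamiltonian system of the mean-field control problem are identical.) -/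
open Matrix Set

lemma hat_eq {n : ℕ} (Q P : Matrix (Fin n) (Fin n) ℝ)
    (h : Pᵀ * Q = Pᵀ * Q * P) :
    (1 - P)ᵀ * Q * (1 - P) = Q - Q * P := by
  have : (1 - P)ᵀ * Q * (1 - P)
      = Q - Q * P - (Pᵀ * Q - Pᵀ * Q * P) := by
    simp [Matrix.transpose_sub, sub_mul, mul_sub]
    noncomm_ring
  rw [this, sub_eq_zero_of_eq h, sub_zero]

/-- Deterministic (zero-noise) version of Lemma 4.1: when `Ā = B̄ = 0`,
`Γ₁ᵀQ = Γ₁ᵀQΓ₁` and `Γ₂ᵀG = Γ₂ᵀGΓ₂`, a triple `(x, u, l)` solves the consistency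
system det-(CC-MG) of the mean-field game iff it solves the Hamiltonian system
det-(H-MC) of the mean-field control problem. -/
theorem stmt_3 {n m : ℕ} (T : ℝ) (hT : 0 < T) (x₀ : Fin n → ℝ)
    (A Abar Q Γ₁ : ℝ → Matrix (Fin n) (Fin n) ℝ)
    (B Bbar : ℝ → Matrix (Fin n) (Fin m) ℝ)
    (R : ℝ → Matrix (Fin m) (Fin m) ℝ)
    (hA : ContinuousOn A (Icc 0 T)) (hQ : ContinuousOn Q (Icc 0 T))
    (hΓ₁ : ContinuousOn Γ₁ (Icc 0 T)) (hB : ContinuousOn B (Icc 0 T))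
    (hR : ContinuousOn R (Icc 0 T))
    (hQsymm : ∀ t, (Q t)ᵀ = Q t) (hRsymm : ∀ t, (R t)ᵀ = R t)
    (G Γ₂ : Matrix (Fin n) (Fin n) ℝ) (hGsymm : Gᵀ = G)
    -- vanishing mean-field coefficients
    (hAbar0 : ∀ t, Abar t = 0) (hBbar0 : ∀ t, Bbar t = 0)
    -- structural conditions on the weights (e.g. Γ₁ = Γ₂ = I or Γ₁ = Γ₂ = 0)
    (hΓ₁Q : ∀ t ∈ Icc (0 : ℝ) T, (Γ₁ t)ᵀ * Q t = (Γ₁ t)ᵀ * Q t * Γ₁ t)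
    (hΓ₂G : Γ₂ᵀ * G = Γ₂ᵀ * G * Γ₂)
    (x l : ℝ → Fin n → ℝ) (u : ℝ → Fin m → ℝ) (hu : ContinuousOn u (Icc 0 T)) :
    -- det-(CC-MG)
    (x 0 = x₀ ∧
      (∀ t ∈ Icc (0 : ℝ) T,
        HasDerivWithinAt x (A t *ᵥ x t + B t *ᵥ u t) (Icc 0 T) t) ∧
      (∀ t ∈ Icc (0 : ℝ) T,
        HasDerivWithinAt l (-((A t)ᵀ *ᵥ l t + Q t *ᵥ x t - (Q t * Γ₁ t) *ᵥ x t)) (Icc 0 T) t) ∧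
      l T = G *ᵥ x T - (G * Γ₂) *ᵥ x T ∧
      (∀ t ∈ Icc (0 : ℝ) T, (B t)ᵀ *ᵥ l t + R t *ᵥ u t = 0))
    ↔
    -- det-(H-MC)
    (x 0 = x₀ ∧
      (∀ t ∈ Icc (0 : ℝ) T,
        HasDerivWithinAt x ((A t + Abar t) *ᵥ x t + (B t + Bbar t) *ᵥ u t) (Icc 0 T) t) ∧
      (∀ t ∈ Icc (0 : ℝ) T,
        HasDerivWithinAt l
          (-(((1 - Γ₁ t)ᵀ * Q t * (1 - Γ₁ t)) *ᵥ x t + (A t + Abar t)ᵀ *ᵥ l t)) (Icc 0 T) t) ∧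
      l T = ((1 - Γ₂)ᵀ * G * (1 - Γ₂)) *ᵥ x T ∧
      (∀ t ∈ Icc (0 : ℝ) T, R t *ᵥ u t + (B t + Bbar t)ᵀ *ᵥ l t = 0)) := by
  have hG' : (1 - Γ₂)ᵀ * G * (1 - Γ₂) = G - G * Γ₂ := hat_eq G Γ₂ hΓ₂G
  have hcost : ∀ t ∈ Icc (0 : ℝ) T,
      (-(((1 - Γ₁ t)ᵀ * Q t * (1 - Γ₁ t)) *ᵥ x t + (A t + Abar t)ᵀ *ᵥ l t))
      = -((A t)ᵀ *ᵥ l t + Q t *ᵥ x t - (Q t * Γ₁ t) *ᵥ x t) := by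
    intro t ht
    rw [hat_eq (Q t) (Γ₁ t) (hΓ₁Q t ht), hAbar0 t]
    simp [Matrix.sub_mulVec]
    abel
  constructor
  · rintro ⟨h0, hx, hl, hterm, hopt⟩
    refine ⟨h0, fun t ht => by simpa [hAbar0 t, hBbar0 t] using hx t ht,
      fun t ht => by rw [hcost t ht]; exact hl t ht,
      by rw [hG', Matrix.sub_mulVec]; exact hterm,
      fun t ht => by rw [hBbar0 t, add_zero, add_comm]; exact hopt t ht⟩
  · rintro ⟨h0, hx, hl, hterm, hopt⟩
    refine ⟨h0, fun t ht => by simpa [hAbar0 t, hBbar0 t] using hx t ht,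
      fun t ht => by rw [← hcost t ht]; exact hl t ht,
      by rw [hG', Matrix.sub_mulVec] at hterm; exact hterm,
      fun t ht => by have := hopt t ht; rw [hBbar0 t, add_zero] at this; rw [add_comm]; exact this⟩
end

section
/- Assume ⟨Q̂(t)v, v⟩ ≥ 0 for all t and v ∈ ℝⁿ, ⟨Ĝv, v⟩ ≥ 0 for all v ∈ ℝⁿ, and there is ε > 0 with ⟨R(t)w, w⟩ ≥ ε‖w‖² for all t and w ∈ ℝᵐ. If (x, u, p, p¹, p²) solves the system det-(CC-MT) with initial value x₀, then u is the unique minimizer, over all continuous controls v : [0,T] → ℝᵐ, of the mean-field control cost J^{MC}(x₀; v) = ½∫₀ᵀ (⟨Q̂(t)x_v(t), x_v(t)⟩ + ⟨R(t)v(t), v(t)⟩) dt + ½⟨Ĝ x_v(T), x_v(T)⟩, where x_v solves x_v' = 𝒜 x_v + ℬ v, x_v(0) = x₀. (Deterministic, zero-noise version of Theorem 4.1: the mean-field team consistency strategy coincides with the unique optimal control of the mean-field control problem.) -/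
open Matrix Set MeasureTheory intervalIntegral

section helpers
variable {k l : ℕ} {s : Set ℝ}

lemma myContOn_mulVec {M : ℝ → Matrix (Fin k) (Fin l) ℝ} {f : ℝ → Fin l → ℝ}
    (hM : ContinuousOn M s) (hf : ContinuousOn f s) :
    ContinuousOn (fun t => M t *ᵥ f t) s := by
  rw [continuousOn_iff_continuous_restrict] at *
  exact hM.matrix_mulVec hf

lemma myContOn_dot {f g : ℝ → Fin k → ℝ} (hf : ContinuousOn f s) (hg : ContinuousOn g s) :
    ContinuousOn (fun t => f t ⬝ᵥ g t) s := by
  rw [continuousOn_iff_continuous_restrict] at *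
  exact hf.dotProduct hg

lemma myContOn_matmul {a b c : ℕ} {M : ℝ → Matrix (Fin a) (Fin b) ℝ}
    {N : ℝ → Matrix (Fin b) (Fin c) ℝ} (hM : ContinuousOn M s) (hN : ContinuousOn N s) :
    ContinuousOn (fun t => M t * N t) s := by
  rw [continuousOn_iff_continuous_restrict] at *
  exact hM.matrix_mul hN

lemma myContOn_transpose {M : ℝ → Matrix (Fin k) (Fin l) ℝ} (hM : ContinuousOn M s) :
    ContinuousOn (fun t => (M t)ᵀ) s := by
  rw [continuousOn_iff_continuous_restrict] at *
  exact hM.matrix_transpose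

lemma myHasDerivWithinAt_dot {t : ℝ} {f g : ℝ → Fin k → ℝ} {f' g' : Fin k → ℝ}
    (hf : HasDerivWithinAt f f' s t) (hg : HasDerivWithinAt g g' s t) :
    HasDerivWithinAt (fun t => f t ⬝ᵥ g t) (f' ⬝ᵥ g t + f t ⬝ᵥ g') s t := by
  have h : ∀ i ∈ (Finset.univ : Finset (Fin k)), HasDerivWithinAt (fun t => f t i * g t i)
      (f' i * g t i + f t i * g' i) s t :=
    fun i _ => (hasDerivWithinAt_pi.1 hf i).mul (hasDerivWithinAt_pi.1 hg i)
  have := HasDerivWithinAt.fun_sum h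
  simpa [dotProduct, Finset.sum_add_distrib] using this

lemma mySymm_dot {M : Matrix (Fin k) (Fin k) ℝ} (hM : Mᵀ = M) (a b : Fin k → ℝ) :
    (M *ᵥ a) ⬝ᵥ b = (M *ᵥ b) ⬝ᵥ a := by
  conv_lhs => rw [← hM, mulVec_transpose, ← dotProduct_mulVec]
  rw [dotProduct_comm]

lemma myTranspose_dot (M : Matrix (Fin k) (Fin l) ℝ) (a : Fin k → ℝ) (b : Fin l → ℝ) :
    (Mᵀ *ᵥ a) ⬝ᵥ b = a ⬝ᵥ (M *ᵥ b) := by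
  rw [mulVec_transpose, ← dotProduct_mulVec]

lemma myDot_self_nonneg (w : Fin k → ℝ) : 0 ≤ w ⬝ᵥ w :=
  Finset.sum_nonneg fun i _ => mul_self_nonneg _

lemma myEq_zero_of_dot_self {w : Fin k → ℝ} (h : w ⬝ᵥ w = 0) : w = 0 := by
  funext i
  have := (Finset.sum_eq_zero_iff_of_nonneg (fun j _ => mul_self_nonneg (w j))).1 h i
    (Finset.mem_univ i)
  exact mul_self_eq_zero.1 this

end helpers

lemma myIntegral_pos {f : ℝ → ℝ} {a b t₀ : ℝ} (hab : a < b) (ht₀ : t₀ ∈ Icc a b)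
    (hf : ContinuousOn f (Icc a b)) (h0 : ∀ t ∈ Icc a b, 0 ≤ f t) (hpos : 0 < f t₀) :
    0 < ∫ t in a..b, f t := by
  have hev : ∀ᶠ t in nhdsWithin t₀ (Icc a b), f t₀ / 2 < f t :=
    (hf t₀ ht₀).eventually (eventually_gt_nhds (by linarith))
  rw [Filter.Eventually, Metric.mem_nhdsWithin_iff] at hev
  obtain ⟨δ, hδ, hball⟩ := hev
  set c := max a (t₀ - δ / 2) with hc
  set d := min b (t₀ + δ / 2) with hd
  have hct : c ≤ t₀ := max_le ht₀.1 (by linarith)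
  have htd : t₀ ≤ d := le_min ht₀.2 (by linarith)
  have hcd : c < d := by
    rcases lt_or_ge t₀ b with h | h
    · exact lt_of_le_of_lt hct (lt_min h (by linarith))
    · have hb : t₀ = b := le_antisymm ht₀.2 h
      have : c < b := max_lt hab (by rw [hb]; linarith)
      exact lt_of_lt_of_le this (le_min le_rfl (by rw [hb]; linarith))
  have hsub : Icc c d ⊆ Icc a b := Icc_subset_Icc (le_max_left _ _) (min_le_left _ _)
  have hlow : ∀ t ∈ Icc c d, f t₀ / 2 ≤ f t := by
    intro t ht
    refine le_of_lt (hball ⟨?_, hsub ht⟩)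
    rw [Metric.mem_ball, Real.dist_eq, abs_sub_lt_iff]
    constructor
    · have : t ≤ t₀ + δ / 2 := le_trans ht.2 (min_le_right _ _)
      linarith
    · have : t₀ - δ / 2 ≤ t := le_trans (le_max_right _ _) ht.1
      linarith
  have hint : IntervalIntegrable f volume a b :=
    (hf.mono (by rw [uIcc_of_le hab.le]) : ContinuousOn f (uIcc a b)).intervalIntegrable
  have hintcd : IntervalIntegrable f volume c d :=
    ((hf.mono hsub).mono (by rw [uIcc_of_le hcd.le]) :
      ContinuousOn f (uIcc c d)).intervalIntegrable
  have h1 : (d - c) * (f t₀ / 2) ≤ ∫ t in c..d, f t := by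
    have := intervalIntegral.integral_mono_on hcd.le
      (_root_.intervalIntegrable_const (c := f t₀ / 2)) hintcd hlow
    rw [intervalIntegral.integral_const, smul_eq_mul] at this
    linarith
  have hac : a ≤ c := le_max_left _ _
  have hdb : d ≤ b := min_le_left _ _
  have h2 : 0 ≤ ∫ t in a..c, f t :=
    intervalIntegral.integral_nonneg hac fun t ht =>
      h0 t ⟨ht.1, le_trans ht.2 (le_trans hcd.le hdb)⟩
  have h3 : 0 ≤ ∫ t in d..b, f t :=
    intervalIntegral.integral_nonneg hdb fun t ht =>
      h0 t ⟨le_trans (le_trans hac hcd.le) ht.1, ht.2⟩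
  have m1 : IntervalIntegrable f volume a c := hint.mono_set (by rw [uIcc_of_le hac, uIcc_of_le hab.le]; exact Icc_subset_Icc le_rfl (le_trans hcd.le hdb))
  have m2 : IntervalIntegrable f volume c d := hint.mono_set (by rw [uIcc_of_le hcd.le, uIcc_of_le hab.le]; exact hsub)
  have m3 : IntervalIntegrable f volume a d := hint.mono_set (by rw [uIcc_of_le (le_trans hac hcd.le), uIcc_of_le hab.le]; exact Icc_subset_Icc le_rfl hdb)
  have m4 : IntervalIntegrable f volume d b := hint.mono_set (by rw [uIcc_of_le hdb, uIcc_of_le hab.le]; exact Icc_subset_Icc (le_trans hac hcd.le) le_rfl)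
  have hsplit : (∫ t in a..b, f t)
      = (∫ t in a..c, f t) + (∫ t in c..d, f t) + ∫ t in d..b, f t := by
    rw [intervalIntegral.integral_add_adjacent_intervals m1 m2,
      intervalIntegral.integral_add_adjacent_intervals m3 m4]
  have : 0 < (d - c) * (f t₀ / 2) := mul_pos (by linarith) (by linarith)
  linarith

lemma myEq_zero_of_integral {f : ℝ → ℝ} {a b : ℝ} (hab : a < b)
    (hf : ContinuousOn f (Icc a b)) (h0 : ∀ t ∈ Icc a b, 0 ≤ f t)
    (hz : (∫ t in a..b, f t) ≤ 0) : ∀ t ∈ Icc a b, f t = 0 := by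
  intro t ht
  by_contra h
  have hpos : 0 < f t := lt_of_le_of_ne (h0 t ht) (Ne.symm h)
  have := myIntegral_pos hab ht hf h0 hpos
  linarith

lemma myExists_bound {k : ℕ} {T : ℝ} (h0T : (0:ℝ) ≤ T) (A : ℝ → Matrix (Fin k) (Fin k) ℝ)
    (hA : ContinuousOn A (Icc 0 T)) :
    ∃ C : ℝ, 0 ≤ C ∧ ∀ t ∈ Icc (0:ℝ) T, ∀ w : Fin k → ℝ, ‖A t *ᵥ w‖ ≤ C * ‖w‖ := by
  let L : Matrix (Fin k) (Fin k) ℝ →ₗ[ℝ] ((Fin k → ℝ) →L[ℝ] (Fin k → ℝ)) :=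
    (LinearMap.toContinuousLinearMap : ((Fin k → ℝ) →ₗ[ℝ] (Fin k → ℝ)) ≃ₗ[ℝ] _).toLinearMap ∘ₗ
      (Matrix.toLin' : Matrix (Fin k) (Fin k) ℝ ≃ₗ[ℝ] _).toLinearMap
  have hLc : Continuous L := L.continuous_of_finiteDimensional
  have hφ : ContinuousOn (fun t => ‖L (A t)‖) (Icc 0 T) :=
    (continuous_norm.comp hLc).comp_continuousOn hA
  obtain ⟨t₁, _, ht₁⟩ := IsCompact.exists_isMaxOn isCompact_Icc (nonempty_Icc.2 h0T) hφ
  refine ⟨max ‖L (A t₁)‖ 0, le_max_right _ _, fun t ht w => ?_⟩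
  have h1 : ‖A t *ᵥ w‖ = ‖L (A t) w‖ := by
    simp [L, Matrix.toLin'_apply]
  have h2 : ‖L (A t) w‖ ≤ ‖L (A t)‖ * ‖w‖ := (L (A t)).le_opNorm w
  have h3 : ‖L (A t)‖ ≤ max ‖L (A t₁)‖ 0 := le_trans (ht₁ ht) (le_max_left _ _)
  rw [h1]
  exact le_trans h2 (mul_le_mul_of_nonneg_right h3 (norm_nonneg _))

/-- Backward uniqueness for the affine ODE `f' = A2 f + c` on `[0, T]`. -/
lemma myODE_eq {k : ℕ} {T : ℝ} (hT : 0 < T) {A2 : ℝ → Matrix (Fin k) (Fin k) ℝ}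
    (hA2 : ContinuousOn A2 (Icc 0 T)) {c f g : ℝ → Fin k → ℝ}
    (hf : ∀ t ∈ Icc (0:ℝ) T, HasDerivWithinAt f (A2 t *ᵥ f t + c t) (Icc 0 T) t)
    (hg : ∀ t ∈ Icc (0:ℝ) T, HasDerivWithinAt g (A2 t *ᵥ g t + c t) (Icc 0 T) t)
    (hend : f T = g T) : ∀ t ∈ Icc (0:ℝ) T, f t = g t := by
  have h0T : (0:ℝ) ≤ T := hT.le
  obtain ⟨C, hC0, hCb⟩ := myExists_bound h0T A2 hA2
  set π : ℝ → ℝ := fun t => max 0 (min T t) with hπ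
  have hπmem : ∀ t, π t ∈ Icc (0:ℝ) T := fun t => ⟨le_max_left _ _, max_le h0T (min_le_left _ _)⟩
  have hπeq : ∀ t ∈ Icc (0:ℝ) T, π t = t := fun t ht => by
    simp only [hπ]
    rw [min_eq_right ht.2, max_eq_right ht.1]
  have hlip : ∀ t : ℝ, LipschitzOnWith C.toNNReal
      (fun q => A2 (π t) *ᵥ q + c (π t)) univ := by
    intro t
    apply LipschitzWith.lipschitzOnWith
    apply LipschitzWith.of_dist_le_mul
    intro q r
    rw [dist_eq_norm, dist_eq_norm, Real.coe_toNNReal C hC0]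
    have e : (A2 (π t) *ᵥ q + c (π t)) - (A2 (π t) *ᵥ r + c (π t)) = A2 (π t) *ᵥ (q - r) := by
      rw [Matrix.mulVec_sub]; abel
    rw [e]
    exact hCb (π t) (hπmem t) _
  have hmem : ∀ t ∈ Ioc (0:ℝ) T, Icc (0:ℝ) T ∈ nhdsWithin t (Iic t) :=
    fun t ht => mem_nhdsWithin.mpr
      ⟨Ioi 0, isOpen_Ioi, ht.1, fun y hy => ⟨hy.1.le, le_trans hy.2 ht.2⟩⟩
  have hfc : ContinuousOn f (Icc 0 T) := fun t ht => (hf t ht).continuousWithinAt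
  have hgc : ContinuousOn g (Icc 0 T) := fun t ht => (hg t ht).continuousWithinAt
  have key := ODE_solution_unique_of_mem_Icc_left
    (v := fun t q => A2 (π t) *ᵥ q + c (π t)) (s := fun _ => univ) (fun t _ => hlip t) hfc
    (fun t ht => by
      have h := (hf t (Ioc_subset_Icc_self ht)).mono_of_mem_nhdsWithin (hmem t ht)
      show HasDerivWithinAt f (A2 (π t) *ᵥ f t + c (π t)) (Iic t) t
      rw [hπeq t (Ioc_subset_Icc_self ht)]; exact h)
    (fun _ _ => mem_univ _) hgc
    (fun t ht => by
      have h := (hg t (Ioc_subset_Icc_self ht)).mono_of_mem_nhdsWithin (hmem t ht)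
      show HasDerivWithinAt g (A2 (π t) *ᵥ g t + c (π t)) (Iic t) t
      rw [hπeq t (Ioc_subset_Icc_self ht)]; exact h)
    (fun _ _ => mem_univ _) hend
  exact fun t ht => key ht
/-- The quadratic cost functional of the deterministic mean-field control problem,
with weights `Q̂`, `R`, `Ĝ`. -/
noncomputable def mcCost {n m : ℕ} (T : ℝ)
    (Qhat : ℝ → Matrix (Fin n) (Fin n) ℝ) (R : ℝ → Matrix (Fin m) (Fin m) ℝ)
    (Ghat : Matrix (Fin n) (Fin n) ℝ)
    (x : ℝ → Fin n → ℝ) (u : ℝ → Fin m → ℝ) : ℝ :=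
  (1 / 2) * (∫ t in (0 : ℝ)..T, ((Qhat t *ᵥ x t) ⬝ᵥ x t + (R t *ᵥ u t) ⬝ᵥ u t))
    + (1 / 2) * ((Ghat *ᵥ x T) ⬝ᵥ x T)

/-- Deterministic (zero-noise) version of Theorem 4.1: if `(x, u, p, p¹, p²)` solves the
consistency system det-(CC-MT) of the mean-field team problem, then `u` is the unique
minimizer of the mean-field control cost `J^{MC}(x₀; ·)` over continuous controls. -/
theorem stmt_10 {n m : ℕ} (T : ℝ) (hT : 0 < T) (x₀ : Fin n → ℝ)
    (A Abar Q Γ₁ : ℝ → Matrix (Fin n) (Fin n) ℝ)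
    (B Bbar : ℝ → Matrix (Fin n) (Fin m) ℝ)
    (R : ℝ → Matrix (Fin m) (Fin m) ℝ)
    (hA : ContinuousOn A (Icc 0 T)) (hAbar : ContinuousOn Abar (Icc 0 T))
    (hQ : ContinuousOn Q (Icc 0 T)) (hΓ₁ : ContinuousOn Γ₁ (Icc 0 T))
    (hB : ContinuousOn B (Icc 0 T)) (hBbar : ContinuousOn Bbar (Icc 0 T))
    (hR : ContinuousOn R (Icc 0 T))
    (hQsymm : ∀ t, (Q t)ᵀ = Q t) (hRsymm : ∀ t, (R t)ᵀ = R t)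
    (G Γ₂ : Matrix (Fin n) (Fin n) ℝ) (hGsymm : Gᵀ = G)
    -- positivity assumptions on Q̂ = (I−Γ₁)ᵀQ(I−Γ₁), Ĝ = (I−Γ₂)ᵀG(I−Γ₂), R
    (hQpos : ∀ t ∈ Icc (0 : ℝ) T, ∀ v : Fin n → ℝ,
      0 ≤ (((1 - Γ₁ t)ᵀ * Q t * (1 - Γ₁ t)) *ᵥ v) ⬝ᵥ v)
    (hGpos : ∀ v : Fin n → ℝ, 0 ≤ (((1 - Γ₂)ᵀ * G * (1 - Γ₂)) *ᵥ v) ⬝ᵥ v)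
    (ε : ℝ) (hε : 0 < ε)
    (hRpos : ∀ t ∈ Icc (0 : ℝ) T, ∀ w : Fin m → ℝ, ε * (w ⬝ᵥ w) ≤ (R t *ᵥ w) ⬝ᵥ w)
    -- (x, u, p, p¹, p²) solves det-(CC-MT)
    (x p p1 p2 : ℝ → Fin n → ℝ) (u : ℝ → Fin m → ℝ)
    (hu : ContinuousOn u (Icc 0 T))
    (hx0 : x 0 = x₀)
    (hx : ∀ t ∈ Icc (0 : ℝ) T,
      HasDerivWithinAt x ((A t + Abar t) *ᵥ x t + (B t + Bbar t) *ᵥ u t) (Icc 0 T) t)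
    (hp1 : ∀ t ∈ Icc (0 : ℝ) T,
      HasDerivWithinAt p1 (-(Q t *ᵥ x t + (A t)ᵀ *ᵥ p1 t)) (Icc 0 T) t)
    (hp1T : p1 T = G *ᵥ x T)
    (hp2 : ∀ t ∈ Icc (0 : ℝ) T,
      HasDerivWithinAt p2
        (-(((Γ₁ t)ᵀ * Q t * Γ₁ t - (Γ₁ t)ᵀ * Q t - Q t * Γ₁ t) *ᵥ x t
          + (Abar t)ᵀ *ᵥ p1 t + (A t + Abar t)ᵀ *ᵥ p2 t)) (Icc 0 T) t)
    (hp2T : p2 T = (Γ₂ᵀ * G * Γ₂ - Γ₂ᵀ * G - G * Γ₂) *ᵥ x T)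
    (hp : ∀ t ∈ Icc (0 : ℝ) T,
      HasDerivWithinAt p
        (-(((1 - Γ₁ t)ᵀ * Q t * (1 - Γ₁ t)) *ᵥ x t + (A t)ᵀ *ᵥ p t
          + (Abar t)ᵀ *ᵥ (p1 t + p2 t))) (Icc 0 T) t)
    (hpT : p T = ((1 - Γ₂)ᵀ * G * (1 - Γ₂)) *ᵥ x T)
    (hstat : ∀ t ∈ Icc (0 : ℝ) T,
      R t *ᵥ u t + (B t)ᵀ *ᵥ p t + (Bbar t)ᵀ *ᵥ (p1 t + p2 t) = 0) :
    -- conclusion: u is the unique minimizer of J^{MC}(x₀; ·)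
    ∀ (v : ℝ → Fin m → ℝ) (xv : ℝ → Fin n → ℝ),
      ContinuousOn v (Icc 0 T) → xv 0 = x₀ →
      (∀ t ∈ Icc (0 : ℝ) T,
        HasDerivWithinAt xv ((A t + Abar t) *ᵥ xv t + (B t + Bbar t) *ᵥ v t) (Icc 0 T) t) →
      mcCost T (fun t => (1 - Γ₁ t)ᵀ * Q t * (1 - Γ₁ t)) R ((1 - Γ₂)ᵀ * G * (1 - Γ₂)) x u
        ≤ mcCost T (fun t => (1 - Γ₁ t)ᵀ * Q t * (1 - Γ₁ t)) R ((1 - Γ₂)ᵀ * G * (1 - Γ₂)) xv v ∧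
      (mcCost T (fun t => (1 - Γ₁ t)ᵀ * Q t * (1 - Γ₁ t)) R ((1 - Γ₂)ᵀ * G * (1 - Γ₂)) xv v
          = mcCost T (fun t => (1 - Γ₁ t)ᵀ * Q t * (1 - Γ₁ t)) R ((1 - Γ₂)ᵀ * G * (1 - Γ₂)) x u →
        ∀ t ∈ Icc (0 : ℝ) T, v t = u t) := by
  intro v xv hvc hxv0 hxvd
  have h0T : (0:ℝ) ≤ T := hT.le
  set Qh : ℝ → Matrix (Fin n) (Fin n) ℝ := fun t => (1 - Γ₁ t)ᵀ * Q t * (1 - Γ₁ t) with hQh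
  set Gh : Matrix (Fin n) (Fin n) ℝ := (1 - Γ₂)ᵀ * G * (1 - Γ₂) with hGh
  have hQh' : ∀ t : ℝ, (1 - Γ₁ t)ᵀ * Q t * (1 - Γ₁ t) = Qh t := fun t => by rw [hQh]
  have hGh' : ((1 : Matrix (Fin n) (Fin n) ℝ) - Γ₂)ᵀ * G * (1 - Γ₂) = Gh := by rw [hGh]
  simp only [hQh', hGh'] at hQpos hGpos hp hpT ⊢
  -- symmetry of Q̂, Ĝ
  have hQhs : ∀ t : ℝ, (Qh t)ᵀ = Qh t := by
    intro t
    rw [hQh]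
    simp only [transpose_mul, transpose_transpose, hQsymm, mul_assoc]
  have hGhs : Ghᵀ = Gh := by
    rw [hGh]
    simp only [transpose_mul, transpose_transpose, hGsymm, mul_assoc]
  -- continuity
  have hxc : ContinuousOn x (Icc 0 T) := fun t ht => (hx t ht).continuousWithinAt
  have hpc : ContinuousOn p (Icc 0 T) := fun t ht => (hp t ht).continuousWithinAt
  have hp1c : ContinuousOn p1 (Icc 0 T) := fun t ht => (hp1 t ht).continuousWithinAt
  have hp2c : ContinuousOn p2 (Icc 0 T) := fun t ht => (hp2 t ht).continuousWithinAt
  have hxvc : ContinuousOn xv (Icc 0 T) := fun t ht => (hxvd t ht).continuousWithinAt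
  have hΓ₁' : ContinuousOn (fun t => (1 : Matrix (Fin n) (Fin n) ℝ) - Γ₁ t) (Icc 0 T) :=
    continuousOn_const.sub hΓ₁
  have hQhc : ContinuousOn Qh (Icc 0 T) := by
    rw [hQh]
    exact myContOn_matmul (myContOn_matmul (myContOn_transpose hΓ₁') hQ) hΓ₁'
  -- expansion of Q̂ and Ĝ
  have hQhexp : ∀ t : ℝ, Qh t
      = Q t + ((Γ₁ t)ᵀ * Q t * Γ₁ t - (Γ₁ t)ᵀ * Q t - Q t * Γ₁ t) := by
    intro t
    rw [hQh]
    simp only [transpose_sub, transpose_one]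
    noncomm_ring
  have hGhexp : Gh = G + (Γ₂ᵀ * G * Γ₂ - Γ₂ᵀ * G - G * Γ₂) := by
    rw [hGh]
    simp only [transpose_sub, transpose_one]
    noncomm_ring
  -- p1 + p2 satisfies the same ODE as p
  have hsd : ∀ t ∈ Icc (0:ℝ) T, HasDerivWithinAt (fun t => p1 t + p2 t)
      (-(Qh t *ᵥ x t + (A t)ᵀ *ᵥ (p1 t + p2 t)
        + (Abar t)ᵀ *ᵥ (p1 t + p2 t))) (Icc 0 T) t := by
    intro t ht
    have h := (hp1 t ht).add (hp2 t ht)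
    have e : (-(Q t *ᵥ x t + (A t)ᵀ *ᵥ p1 t))
        + (-((((Γ₁ t)ᵀ * Q t * Γ₁ t - (Γ₁ t)ᵀ * Q t - Q t * Γ₁ t)) *ᵥ x t
          + (Abar t)ᵀ *ᵥ p1 t + (A t + Abar t)ᵀ *ᵥ p2 t))
        = -(Qh t *ᵥ x t + (A t)ᵀ *ᵥ (p1 t + p2 t) + (Abar t)ᵀ *ᵥ (p1 t + p2 t)) := by
      rw [hQhexp t]
      simp only [Matrix.add_mulVec, Matrix.sub_mulVec, Matrix.transpose_add, Matrix.mulVec_add]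
      abel
    rw [e] at h
    exact h
  -- uniqueness: p = p1 + p2 on [0, T]
  have heqps : ∀ t ∈ Icc (0:ℝ) T, p t = p1 t + p2 t := by
    have hA2 : ContinuousOn (fun t => -(A t)ᵀ) (Icc 0 T) := (myContOn_transpose hA).neg
    refine myODE_eq hT hA2
      (c := fun t => -(Qh t *ᵥ x t + (Abar t)ᵀ *ᵥ (p1 t + p2 t))) ?_ ?_ ?_
    · intro t ht
      have h := hp t ht
      have e : -(Qh t *ᵥ x t + (A t)ᵀ *ᵥ p t + (Abar t)ᵀ *ᵥ (p1 t + p2 t))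
          = (-(A t)ᵀ) *ᵥ p t + -(Qh t *ᵥ x t + (Abar t)ᵀ *ᵥ (p1 t + p2 t)) := by
        rw [Matrix.neg_mulVec]
        abel
      rw [e] at h
      exact h
    · intro t ht
      have h := hsd t ht
      have e : -(Qh t *ᵥ x t + (A t)ᵀ *ᵥ (p1 t + p2 t) + (Abar t)ᵀ *ᵥ (p1 t + p2 t))
          = (-(A t)ᵀ) *ᵥ (p1 t + p2 t)
            + -(Qh t *ᵥ x t + (Abar t)ᵀ *ᵥ (p1 t + p2 t)) := by
        rw [Matrix.neg_mulVec]
        abel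
      rw [e] at h
      exact h
    · rw [hpT, hp1T, hp2T, hGhexp]
      simp only [Matrix.add_mulVec]
  -- adjoint equation for p alone
  have hpd : ∀ t ∈ Icc (0:ℝ) T, HasDerivWithinAt p
      (-(Qh t *ᵥ x t + (A t + Abar t)ᵀ *ᵥ p t)) (Icc 0 T) t := by
    intro t ht
    have h := hp t ht
    have e : -(Qh t *ᵥ x t + (A t)ᵀ *ᵥ p t + (Abar t)ᵀ *ᵥ (p1 t + p2 t))
        = -(Qh t *ᵥ x t + (A t + Abar t)ᵀ *ᵥ p t) := by
      rw [← heqps t ht]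
      simp only [Matrix.transpose_add, Matrix.add_mulVec]
      abel
    rw [e] at h
    exact h
  -- stationarity for the combined matrix
  have hstat' : ∀ t ∈ Icc (0:ℝ) T, (B t + Bbar t)ᵀ *ᵥ p t = -(R t *ᵥ u t) := by
    intro t ht
    have h := hstat t ht
    rw [← heqps t ht] at h
    rw [add_assoc] at h
    have h2 := eq_neg_of_add_eq_zero_right h
    rw [Matrix.transpose_add, Matrix.add_mulVec]
    exact h2
  -- derivative of the difference y = xv - x
  have hyd : ∀ t ∈ Icc (0:ℝ) T, HasDerivWithinAt (fun t => xv t - x t)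
      ((A t + Abar t) *ᵥ (xv t - x t) + (B t + Bbar t) *ᵥ (v t - u t)) (Icc 0 T) t := by
    intro t ht
    have h := (hxvd t ht).sub (hx t ht)
    have e : ((A t + Abar t) *ᵥ xv t + (B t + Bbar t) *ᵥ v t)
        - ((A t + Abar t) *ᵥ x t + (B t + Bbar t) *ᵥ u t)
        = (A t + Abar t) *ᵥ (xv t - x t) + (B t + Bbar t) *ᵥ (v t - u t) := by
      simp only [Matrix.mulVec_sub]
      abel
    rw [e] at h
    exact h
  -- derivative of Φ(t) = ⟨p t, y t⟩
  have hΦd : ∀ t ∈ Icc (0:ℝ) T, HasDerivWithinAt (fun t => p t ⬝ᵥ (xv t - x t))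
      (-((Qh t *ᵥ x t) ⬝ᵥ (xv t - x t)) - (R t *ᵥ u t) ⬝ᵥ (v t - u t)) (Icc 0 T) t := by
    intro t ht
    have h := myHasDerivWithinAt_dot (hpd t ht) (hyd t ht)
    have d1 : p t ⬝ᵥ ((A t + Abar t) *ᵥ (xv t - x t))
        = ((A t + Abar t)ᵀ *ᵥ p t) ⬝ᵥ (xv t - x t) := (myTranspose_dot _ _ _).symm
    have d2 : p t ⬝ᵥ ((B t + Bbar t) *ᵥ (v t - u t))
        = ((B t + Bbar t)ᵀ *ᵥ p t) ⬝ᵥ (v t - u t) := (myTranspose_dot _ _ _).symm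
    have e : (-(Qh t *ᵥ x t + (A t + Abar t)ᵀ *ᵥ p t)) ⬝ᵥ (xv t - x t)
        + p t ⬝ᵥ ((A t + Abar t) *ᵥ (xv t - x t) + (B t + Bbar t) *ᵥ (v t - u t))
        = -((Qh t *ᵥ x t) ⬝ᵥ (xv t - x t)) - (R t *ᵥ u t) ⬝ᵥ (v t - u t) := by
      simp only [neg_dotProduct, add_dotProduct, dotProduct_add,
        d1, d2, hstat' t ht]
      ring
    rw [e] at h
    exact h
  -- interval integrability helper
  have hii : ∀ f : ℝ → ℝ, ContinuousOn f (Icc 0 T) → IntervalIntegrable f volume 0 T :=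
    fun f hf => (hf.mono (by rw [uIcc_of_le h0T]) : ContinuousOn f (uIcc 0 T)).intervalIntegrable
  have hDc : ContinuousOn
      (fun t => -((Qh t *ᵥ x t) ⬝ᵥ (xv t - x t)) - (R t *ᵥ u t) ⬝ᵥ (v t - u t)) (Icc 0 T) :=
    ((myContOn_dot (myContOn_mulVec hQhc hxc) (hxvc.sub hxc)).neg).sub
      (myContOn_dot (myContOn_mulVec hR hu) (hvc.sub hu))
  -- fundamental theorem of calculus
  have hΦc : ContinuousOn (fun t => p t ⬝ᵥ (xv t - x t)) (Icc 0 T) :=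
    fun t ht => (hΦd t ht).continuousWithinAt
  have hFTC : (∫ t in (0:ℝ)..T,
        (-((Qh t *ᵥ x t) ⬝ᵥ (xv t - x t)) - (R t *ᵥ u t) ⬝ᵥ (v t - u t)))
      = (Gh *ᵥ x T) ⬝ᵥ (xv T - x T) := by
    have key := intervalIntegral.integral_eq_sub_of_hasDeriv_right_of_le h0T hΦc
      (fun t ht => ((hΦd t (Ioo_subset_Icc_self ht)).hasDerivAt
        (Icc_mem_nhds ht.1 ht.2)).hasDerivWithinAt)
      (hii _ hDc)
    rw [key, hpT, hxv0, hx0]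
    simp [sub_self]
  -- pointwise expansion of the running cost
  have hptQ : ∀ t : ℝ, (Qh t *ᵥ xv t) ⬝ᵥ xv t + (R t *ᵥ v t) ⬝ᵥ v t
      = ((Qh t *ᵥ x t) ⬝ᵥ x t + (R t *ᵥ u t) ⬝ᵥ u t)
        + ((Qh t *ᵥ (xv t - x t)) ⬝ᵥ (xv t - x t) + (R t *ᵥ (v t - u t)) ⬝ᵥ (v t - u t))
        - 2 * (-((Qh t *ᵥ x t) ⬝ᵥ (xv t - x t)) - (R t *ᵥ u t) ⬝ᵥ (v t - u t)) := by
    intro t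
    have e1 : xv t = x t + (xv t - x t) := by abel
    have e2 : v t = u t + (v t - u t) := by abel
    conv_lhs => rw [e1, e2]
    simp only [Matrix.mulVec_add, dotProduct_add, add_dotProduct]
    rw [mySymm_dot (hQhs t) (xv t - x t) (x t), mySymm_dot (hRsymm t) (v t - u t) (u t)]
    ring
  have hptG : (Gh *ᵥ xv T) ⬝ᵥ xv T
      = (Gh *ᵥ x T) ⬝ᵥ x T + (Gh *ᵥ (xv T - x T)) ⬝ᵥ (xv T - x T)
        + 2 * ((Gh *ᵥ x T) ⬝ᵥ (xv T - x T)) := by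
    have e1 : xv T = x T + (xv T - x T) := by abel
    conv_lhs => rw [e1]
    simp only [Matrix.mulVec_add, dotProduct_add, add_dotProduct]
    rw [mySymm_dot hGhs (xv T - x T) (x T)]
    ring
  -- integrability of the pieces
  have hIu : IntervalIntegrable
      (fun t => (Qh t *ᵥ x t) ⬝ᵥ x t + (R t *ᵥ u t) ⬝ᵥ u t) volume 0 T :=
    hii _ ((myContOn_dot (myContOn_mulVec hQhc hxc) hxc).add
      (myContOn_dot (myContOn_mulVec hR hu) hu))
  have hIy : IntervalIntegrable
      (fun t => (Qh t *ᵥ (xv t - x t)) ⬝ᵥ (xv t - x t)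
        + (R t *ᵥ (v t - u t)) ⬝ᵥ (v t - u t)) volume 0 T :=
    hii _ ((myContOn_dot (myContOn_mulVec hQhc (hxvc.sub hxc)) (hxvc.sub hxc)).add
      (myContOn_dot (myContOn_mulVec hR (hvc.sub hu)) (hvc.sub hu)))
  have hID : IntervalIntegrable
      (fun t => -((Qh t *ᵥ x t) ⬝ᵥ (xv t - x t)) - (R t *ᵥ u t) ⬝ᵥ (v t - u t)) volume 0 T :=
    hii _ hDc
  -- splitting the cost integral
  have hsplit : (∫ t in (0:ℝ)..T, ((Qh t *ᵥ xv t) ⬝ᵥ xv t + (R t *ᵥ v t) ⬝ᵥ v t))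
      = (∫ t in (0:ℝ)..T, ((Qh t *ᵥ x t) ⬝ᵥ x t + (R t *ᵥ u t) ⬝ᵥ u t))
        + (∫ t in (0:ℝ)..T, ((Qh t *ᵥ (xv t - x t)) ⬝ᵥ (xv t - x t)
          + (R t *ᵥ (v t - u t)) ⬝ᵥ (v t - u t)))
        - 2 * ((Gh *ᵥ x T) ⬝ᵥ (xv T - x T)) := by
    rw [intervalIntegral.integral_congr
      (g := fun t => ((Qh t *ᵥ x t) ⬝ᵥ x t + (R t *ᵥ u t) ⬝ᵥ u t)
        + ((Qh t *ᵥ (xv t - x t)) ⬝ᵥ (xv t - x t) + (R t *ᵥ (v t - u t)) ⬝ᵥ (v t - u t))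
        - 2 * (-((Qh t *ᵥ x t) ⬝ᵥ (xv t - x t)) - (R t *ᵥ u t) ⬝ᵥ (v t - u t)))
      (fun t _ => hptQ t)]
    rw [intervalIntegral.integral_sub (hIu.add hIy) (hID.const_mul 2),
      intervalIntegral.integral_add hIu hIy, intervalIntegral.integral_const_mul, hFTC]
  -- the cost identity
  have hcostv : mcCost T Qh R Gh xv v
      = mcCost T Qh R Gh x u
        + (1/2) * (∫ t in (0:ℝ)..T, ((Qh t *ᵥ (xv t - x t)) ⬝ᵥ (xv t - x t)
          + (R t *ᵥ (v t - u t)) ⬝ᵥ (v t - u t)))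
        + (1/2) * ((Gh *ᵥ (xv T - x T)) ⬝ᵥ (xv T - x T)) := by
    unfold mcCost
    rw [hsplit, hptG]
    ring
  -- nonnegativity
  have hIynn : (0:ℝ) ≤ ∫ t in (0:ℝ)..T, ((Qh t *ᵥ (xv t - x t)) ⬝ᵥ (xv t - x t)
      + (R t *ᵥ (v t - u t)) ⬝ᵥ (v t - u t)) :=
    intervalIntegral.integral_nonneg h0T (fun t ht => add_nonneg (hQpos t ht _)
      (le_trans (mul_nonneg hε.le (myDot_self_nonneg _)) (hRpos t ht _)))
  have hGnn : (0:ℝ) ≤ (Gh *ᵥ (xv T - x T)) ⬝ᵥ (xv T - x T) := hGpos _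
  constructor
  · rw [hcostv]
    linarith
  · intro heq t ht
    rw [hcostv] at heq
    have hIy0 : (∫ t in (0:ℝ)..T, ((Qh t *ᵥ (xv t - x t)) ⬝ᵥ (xv t - x t)
        + (R t *ᵥ (v t - u t)) ⬝ᵥ (v t - u t))) ≤ 0 := by linarith
    have hwc : ContinuousOn (fun t => ε * ((v t - u t) ⬝ᵥ (v t - u t))) (Icc 0 T) :=
      continuousOn_const.mul (myContOn_dot (hvc.sub hu) (hvc.sub hu))
    have hwle : (∫ t in (0:ℝ)..T, ε * ((v t - u t) ⬝ᵥ (v t - u t)))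
        ≤ ∫ t in (0:ℝ)..T, ((Qh t *ᵥ (xv t - x t)) ⬝ᵥ (xv t - x t)
          + (R t *ᵥ (v t - u t)) ⬝ᵥ (v t - u t)) :=
      intervalIntegral.integral_mono_on h0T (hii _ hwc) hIy
        (fun s hs => le_trans (le_add_of_nonneg_left (hQpos s hs _))
          (add_le_add_right (hRpos s hs _) _))
    have hz := myEq_zero_of_integral hT hwc
      (fun s _ => mul_nonneg hε.le (myDot_self_nonneg _)) (le_trans hwle hIy0) t ht
    have hdz : (v t - u t) ⬝ᵥ (v t - u t) = 0 := by
      rcases mul_eq_zero.1 hz with h | h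
      · exact absurd h hε.ne'
      · exact h
    have := myEq_zero_of_dot_self hdz
    exact sub_eq_zero.1 this
end
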